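/- Consider the closing-equation system −4p − (2/3)q + (2/3)pq + 2p² − (5/6)q² = −4r − (2/3)s + (2/3)rs + 2r² − (5/6)s², −4p − (2/3)q − (2/3)pq − 2p² − (1/4)q² = −4r − (2/3)s − (2/3)rs − 2r² − (1/4)s², p² + q² = 1, r² + s² = 1, with (p,q) ≠ (r,s). The set of unordered pairs {(p,q),(r,s)} arising from its solutions has exactly two elements, and one of them is { (−1/√37, 6/√37), (1/√37, −6/√37) }; in particular there is a second solution pair disjoint from this one. -/

import Mathlib

/-- The closing-equation system for
`X = (-2/3 + 2x/3 - 5y/3, 4 - 4x - 2y/3)` and `Y = (-2/3 - 2x/3 - y/2, 4 + 4x + 2y/3)`. -/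
def closingSys13 (p q r s : ℝ) : Prop :=
  -4 * p - (2 / 3) * q + (2 / 3) * p * q + 2 * p ^ 2 - (5 / 6) * q ^ 2 =
      -4 * r - (2 / 3) * s + (2 / 3) * r * s + 2 * r ^ 2 - (5 / 6) * s ^ 2 ∧
    -4 * p - (2 / 3) * q - (2 / 3) * p * q - 2 * p ^ 2 - (1 / 4) * q ^ 2 =
      -4 * r - (2 / 3) * s - (2 / 3) * r * s - 2 * r ^ 2 - (1 / 4) * s ^ 2 ∧
    p ^ 2 + q ^ 2 = 1 ∧ r ^ 2 + s ^ 2 = 1 ∧ (p, q) ≠ (r, s)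

/-- The set of unordered pairs `{(p,q), (r,s)}` arising from solutions of the closing
equations. -/
def pairSet13 : Set (Set (ℝ × ℝ)) :=
  {t | ∃ p q r s : ℝ, closingSys13 p q r s ∧ t = {(p, q), (r, s)}}

/-- The first intersection pair. -/
noncomputable def pair13 : Set (ℝ × ℝ) :=
  {(-1 / Real.sqrt 37, 6 / Real.sqrt 37), (1 / Real.sqrt 37, -6 / Real.sqrt 37)}

/- ===== auxiliary definitions for the second pair ===== -/

noncomputable def wv : ℝ := Real.sqrt 3281

lemma wv_sq : wv ^ 2 = 3281 := Real.sq_sqrt (by norm_num)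

lemma wv_pos : 0 < wv := Real.sqrt_pos.mpr (by norm_num)

lemma wv_lb : (1432 / 25 : ℝ) < wv := by nlinarith [wv_sq, wv_pos]

lemma wv_ub : wv < 5729 / 100 := by nlinarith [wv_sq, wv_pos]

lemma num_pos : 0 < 4234 * wv - 242118 := by linarith [wv_lb]

lemma den_pos : 0 < 6562 - 110 * wv := by linarith [wv_ub]

noncomputable def bv : ℝ :=
  Real.sqrt (256 * (4234 * wv - 242118) / (169 * (6562 - 110 * wv)))

lemma bv_pos : 0 < bv := by
  apply Real.sqrt_pos.mpr
  apply div_pos (by linarith [num_pos]) (by nlinarith [den_pos])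

lemma bv_sq : 169 * (6562 - 110 * wv) * bv ^ 2 = 256 * (4234 * wv - 242118) := by
  have hd : (169 : ℝ) * (6562 - 110 * wv) ≠ 0 := by nlinarith [den_pos]
  have h : bv ^ 2 = 256 * (4234 * wv - 242118) / (169 * (6562 - 110 * wv)) := by
    apply Real.sq_sqrt
    apply div_nonneg (by linarith [num_pos]) (by nlinarith [den_pos])
  rw [h]
  field_simp
  exact mul_div_cancel_left₀ _ (ne_of_gt den_pos)

lemma bv_sq' : bv ^ 2 = (4234 * wv - 242118) * (3281 + 55 * wv) / 1108978 := by
  linear_combination ((3281 + 55 * wv) / 283898368) * bv_sq +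
    ((1022450 / 283898368) * bv ^ 2) * wv_sq

lemma bv2_lb : (234 / 100 : ℝ) < bv ^ 2 := by
  nlinarith [bv_sq, wv_lb, wv_ub, den_pos, sq_nonneg bv]

lemma bv2_ub : bv ^ 2 < 261 / 100 := by
  nlinarith [bv_sq, wv_lb, wv_ub, den_pos, sq_nonneg bv]

lemma bv_lb : (3 / 2 : ℝ) < bv := by nlinarith [bv2_lb, bv_pos]

lemma bv_ub : bv < 162 / 100 := by nlinarith [bv2_ub, bv_pos]

noncomputable def p2v : ℝ := (41 - wv) / 26 + (55 - wv) * bv / 32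
noncomputable def q2v : ℝ := (6 * wv - 346) / 26 + bv / 2
noncomputable def r2v : ℝ := (41 - wv) / 26 - (55 - wv) * bv / 32
noncomputable def s2v : ℝ := (6 * wv - 346) / 26 - bv / 2

/-- The second intersection pair. -/
noncomputable def pairB : Set (ℝ × ℝ) := {(p2v, q2v), (r2v, s2v)}

lemma q2v_pos : 0 < q2v := by
  unfold q2v; linarith [wv_lb, wv_ub, bv_lb, bv_ub]

lemma q2v_lt : q2v < 98 / 100 := by
  unfold q2v; linarith [wv_lb, wv_ub, bv_lb, bv_ub]

lemma s2v_neg : s2v < 0 := by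
  unfold s2v; linarith [wv_lb, wv_ub, bv_lb, bv_ub]

lemma s2v_gt : -(98 / 100) < s2v := by
  unfold s2v; linarith [wv_lb, wv_ub, bv_lb, bv_ub]

lemma s37_sq : Real.sqrt 37 ^ 2 = 37 := Real.sq_sqrt (by norm_num)

lemma s37_pos : 0 < Real.sqrt 37 := Real.sqrt_pos.mpr (by norm_num)

lemma d37_gt : (98 / 100 : ℝ) < 6 / Real.sqrt 37 := by
  rw [lt_div_iff₀ s37_pos]
  nlinarith [s37_sq, s37_pos]

lemma d37_pos : (0 : ℝ) < 6 / Real.sqrt 37 := by positivity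

/-- The second pair satisfies the closing equations. -/
lemma sysB : closingSys13 p2v q2v r2v s2v := by
  have hw := wv_sq
  have hb := bv_sq'
  unfold closingSys13 p2v q2v r2v s2v
  refine ⟨by ring, by ring, ?_, ?_, ?_⟩
  · linear_combination
      ((366290003/567796736) + (1/416)*bv + (-6260109/283898368)*wv +
        (116435/567796736)*wv^2) * hw +
      ((3281/1024) + (-55/512)*wv + (1/1024)*wv^2) * hb
  · linear_combination
      ((366290003/567796736) + (-1/416)*bv + (-6260109/283898368)*wv +
        (116435/567796736)*wv^2) * hw +
      ((3281/1024) + (-55/512)*wv + (1/1024)*wv^2) * hb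
  · intro hcon
    have h2 := congrArg Prod.snd hcon
    dsimp at h2
    linarith [bv_pos]

/-- The first pair satisfies the closing equations. -/
lemma mem13 : pair13 ∈ pairSet13 := by
  have hc := s37_sq
  have h0 : Real.sqrt 37 ≠ 0 := ne_of_gt s37_pos
  refine ⟨-1 / Real.sqrt 37, 6 / Real.sqrt 37, 1 / Real.sqrt 37, -6 / Real.sqrt 37,
    ⟨by ring, by ring, ?_, ?_, ?_⟩, rfl⟩
  · field_simp
    linarith [hc]
  · field_simp
    linarith [hc]
  · intro h
    have h1 := congrArg Prod.fst h
    dsimp at h1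
    rw [div_eq_div_iff h0 h0] at h1
    nlinarith [s37_pos]

set_option maxHeartbeats 1000000 in
/-- Classification of all solutions. -/
lemma classify (p q r s : ℝ) (h : closingSys13 p q r s) :
    ({(p, q), (r, s)} : Set (ℝ × ℝ)) = pair13 ∨
      ({(p, q), (r, s)} : Set (ℝ × ℝ)) = pairB := by
  obtain ⟨h1, h2, hc1, hc2, hne⟩ := h
  by_cases hqs : q = s
  · subst hqs
    have hp : p = r := by linear_combination (-1/8) * h1 - (1/8) * h2
    exact absurd (by rw [hp]) hne
  have hb0 : q - s ≠ 0 := sub_ne_zero.mpr hqs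
  have hi : (p - r) * (p + r) = -((q - s) * (q + s)) := by linear_combination hc1 - hc2
  have hF : 96 * (p - r) + 16 * (q - s) + 13 * (q - s) * (q + s) = 0 := by
    linear_combination (-12) * h1 - 12 * h2
  by_cases hpr : p = r
  · subst hpr
    have hn0 : q + s = 0 := by
      have h' : (q - s) * (q + s) = 0 := by linear_combination hi
      exact (mul_eq_zero.mp h').resolve_left hb0
    have : q = s := by linear_combination (-3/4) * h1 - (3/4) * h2 - (13/16) * (q - s) * hn0
    exact absurd this hqs
  have ha0 : p - r ≠ 0 := sub_ne_zero.mpr hpr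
  have hG : (q + s) * (8 * (p - r) ^ 2 - 55 * (p - r) * (q - s) - 8 * (q - s) ^ 2) = 0 := by
    linear_combination (12 * (p - r)) * h1 - (12 * (p - r)) * h2 -
      (48 * (p - r) + 8 * (q - s)) * hi
  have hw := wv_sq
  have hsum : (p + r) ^ 2 + (p - r) ^ 2 + (q + s) ^ 2 + (q - s) ^ 2 = 4 := by
    linear_combination 2 * hc1 + 2 * hc2
  by_cases hn : q + s = 0
  · -- antipodal case: the first pair
    have hm' : (p - r) * (p + r) = 0 := by linear_combination hi - (q - s) * hn
    have hm : p + r = 0 := (mul_eq_zero.mp hm').resolve_left ha0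
    have hr' : r = -p := by linarith
    subst hr'
    have hs' : s = -q := by linarith
    subst hs'
    have hq6 : q = -6 * p := by linear_combination (1/32) * hF
    have hp37 : 37 * p ^ 2 = 1 := by linear_combination hc1 - (q - 6 * p) * hq6
    have hc := s37_sq
    have h0 : Real.sqrt 37 ≠ 0 := ne_of_gt s37_pos
    have hfac : (Real.sqrt 37 * p - 1) * (Real.sqrt 37 * p + 1) = 0 := by
      linear_combination hp37 + p ^ 2 * hc
    rcases mul_eq_zero.mp hfac with hcp | hcp
    · -- p = 1/√37
      have hp' : p = 1 / Real.sqrt 37 := by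
        rw [eq_div_iff h0]; linear_combination hcp
      rw [hp'] at hq6
      have hq' : q = -6 / Real.sqrt 37 := by rw [hq6]; ring
      have e1 : ((p, q) : ℝ × ℝ) = (1 / Real.sqrt 37, -6 / Real.sqrt 37) := by
        rw [hp', hq']
      have e2 : ((-p, -q) : ℝ × ℝ) = (-1 / Real.sqrt 37, 6 / Real.sqrt 37) := by
        rw [hp', hq']; simp only [Prod.mk.injEq]; constructor <;> ring
      left
      rw [e1, e2, Set.pair_comm]
      rfl
    · -- p = -1/√37
      have hp' : p = -1 / Real.sqrt 37 := by
        rw [eq_div_iff h0]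
        linear_combination hcp
      rw [hp'] at hq6
      have hq' : q = 6 / Real.sqrt 37 := by rw [hq6]; ring
      have e1 : ((p, q) : ℝ × ℝ) = (-1 / Real.sqrt 37, 6 / Real.sqrt 37) := by
        rw [hp', hq']
      have e2 : ((-p, -q) : ℝ × ℝ) = (1 / Real.sqrt 37, -6 / Real.sqrt 37) := by
        rw [hp', hq']; simp only [Prod.mk.injEq]; constructor <;> ring
      left
      rw [e1, e2]
      rfl
  · -- the second pair
    have h8 : 8 * (p - r) ^ 2 - 55 * (p - r) * (q - s) - 8 * (q - s) ^ 2 = 0 :=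
      (mul_eq_zero.mp hG).resolve_left hn
    have hfac2 : (16 * (p - r) - (55 + wv) * (q - s)) *
        (16 * (p - r) - (55 - wv) * (q - s)) = 0 := by
      linear_combination 32 * h8 - (q - s) ^ 2 * hw
    rcases mul_eq_zero.mp hfac2 with hk | hk
    · -- impossible branch
      exfalso
      have hbn : (q - s) * (208 * (q + s) + 5536 + 96 * wv) = 0 := by
        linear_combination 16 * hF - 96 * hk
      have h13n : 208 * (q + s) + 5536 + 96 * wv = 0 := (mul_eq_zero.mp hbn).resolve_left hb0
      have hn2 : (208 * (q + s)) ^ 2 = (5536 + 96 * wv) ^ 2 := by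
        linear_combination (208 * (q + s) - 5536 - 96 * wv) * h13n
      have hnle : (q + s) ^ 2 ≤ 4 := by
        nlinarith [hsum, sq_nonneg (p + r), sq_nonneg (p - r), sq_nonneg (q - s)]
      have e : 43264 * (q + s) ^ 2 = 30647296 + 1062912 * wv + 9216 * wv ^ 2 := by
        linear_combination hn2
      linarith [e, hw, wv_pos, hnle]
    · -- real branch
      have hbn : (q - s) * (208 * (q + s) + 5536 - 96 * wv) = 0 := by
        linear_combination 16 * hF - 96 * hk
      have h13n0 : 208 * (q + s) + 5536 - 96 * wv = 0 := (mul_eq_zero.mp hbn).resolve_left hb0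
      have hn13 : 13 * (q + s) = 6 * wv - 346 := by linarith
      have hbm : (q - s) * ((55 - wv) * (p + r) + 16 * (q + s)) = 0 := by
        linear_combination 16 * hi - (p + r) * hk
      have h55m : (55 - wv) * (p + r) + 16 * (q + s) = 0 := (mul_eq_zero.mp hbm).resolve_left hb0
      have hm13 : 13 * (p + r) = 41 - wv := by
        linear_combination (-(13 * (55 + wv)) / 256) * h55m + ((55 + wv) / 256) * h13n0 +
          (3 / 8 - (13 / 256) * (p + r)) * hw
      have hb2 : 169 * (6562 - 110 * wv) * (q - s) ^ 2 = 256 * (4234 * wv - 242118) := by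
        linear_combination 43264 * hsum - 256 * (13 * (p + r) + 41 - wv) * hm13 -
          256 * (13 * (q + s) + 6 * wv - 346) * hn13 -
          169 * (16 * (p - r) + (55 - wv) * (q - s)) * hk -
          (169 * (q - s) ^ 2 + 9472) * hw
      have hq2b : (q - s) ^ 2 = bv ^ 2 := by
        have hd : (169 : ℝ) * (6562 - 110 * wv) ≠ 0 := by nlinarith [den_pos]
        have h' : 169 * (6562 - 110 * wv) * ((q - s) ^ 2 - bv ^ 2) = 0 := by
          linear_combination hb2 - bv_sq
        have := (mul_eq_zero.mp h').resolve_left hd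
        linarith
      have hfac3 : (q - s - bv) * (q - s + bv) = 0 := by linear_combination hq2b
      right
      rcases mul_eq_zero.mp hfac3 with hbv | hbv
      · -- q - s = bv
        have hqs' : q - s = bv := by linarith
        have hp' : p = (41 - wv) / 26 + (55 - wv) * bv / 32 := by
          linear_combination (1/26) * hm13 + (1/32) * hk + ((55 - wv) / 32) * hqs'
        have hq' : q = (6 * wv - 346) / 26 + bv / 2 := by
          linear_combination (1/26) * hn13 + (1/2) * hqs'
        have hr' : r = (41 - wv) / 26 - (55 - wv) * bv / 32 := by
          linear_combination (1/26) * hm13 - (1/32) * hk - ((55 - wv) / 32) * hqs'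
        have hs' : s = (6 * wv - 346) / 26 - bv / 2 := by
          linear_combination (1/26) * hn13 - (1/2) * hqs'
        rw [hp', hq', hr', hs']
        rfl
      · -- q - s = -bv
        have hqs' : q - s = -bv := by linarith
        have hqs'' : q - s + bv = 0 := by linarith
        have hp' : p = (41 - wv) / 26 - (55 - wv) * bv / 32 := by
          linear_combination (1/26) * hm13 + (1/32) * hk + ((55 - wv) / 32) * hqs''
        have hq' : q = (6 * wv - 346) / 26 - bv / 2 := by
          linear_combination (1/26) * hn13 + (1/2) * hqs''
        have hr' : r = (41 - wv) / 26 + (55 - wv) * bv / 32 := by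
          linear_combination (1/26) * hm13 - (1/32) * hk - ((55 - wv) / 32) * hqs''
        have hs' : s = (6 * wv - 346) / 26 + bv / 2 := by
          linear_combination (1/26) * hn13 - (1/2) * hqs''
        rw [hp', hq', hr', hs', Set.pair_comm]
        rfl

lemma memB : pairB ∈ pairSet13 := ⟨p2v, q2v, r2v, s2v, sysB, rfl⟩

lemma disjB : Disjoint pairB pair13 := by
  rw [Set.disjoint_left]
  rintro x hx hx13
  simp only [pairB, pair13, Set.mem_insert_iff, Set.mem_singleton_iff] at hx hx13
  rcases hx with rfl | rfl <;> rcases hx13 with h | h <;>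
    · have h2 := congrArg Prod.snd h
      dsimp at h2
      have hng : (-6 : ℝ) / Real.sqrt 37 = -(6 / Real.sqrt 37) := by ring
      first
      | linarith [q2v_lt, d37_gt, h2]
      | linarith [q2v_pos, d37_pos, h2, hng.symm.trans h2.symm]
      | linarith [s2v_neg, d37_pos, h2]
      | linarith [s2v_gt, d37_gt, h2, hng.symm.trans h2.symm]

lemma pairB_ne : pairB ≠ pair13 := by
  intro h
  have hmem : ((p2v, q2v) : ℝ × ℝ) ∈ pairB := Set.mem_insert _ _
  have hnot := Set.disjoint_left.mp disjB hmem
  rw [h] at hmem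
  exact hnot hmem

lemma pairSet13_eq : pairSet13 = {pair13, pairB} := by
  ext t
  simp only [pairSet13, Set.mem_setOf_eq, Set.mem_insert_iff, Set.mem_singleton_iff]
  constructor
  · rintro ⟨p, q, r, s, hsys, rfl⟩
    exact classify p q r s hsys
  · rintro (rfl | rfl)
    · exact mem13
    · exact memB

/-- The set of unordered solution pairs of the closing equations has exactly two elements;
one of them is `{(-1/√37, 6/√37), (1/√37, -6/√37)}`, and the other is disjoint from it. -/
theorem closingSys13_two_pairs :
    pairSet13.ncard = 2 ∧ pair13 ∈ pairSet13 ∧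
    ∃ t ∈ pairSet13, t ≠ pair13 ∧ Disjoint t pair13 := by
  refine ⟨?_, mem13, pairB, memB, pairB_ne, disjB⟩
  rw [pairSet13_eq]
  exact Set.ncard_pair (Ne.symm pairB_ne)
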